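/- For the function h₁(z,w) = -(1+zw)(w+z)(1-z²)/(1+w²+2wz)², defined for (z,w) ∈ [-1,1] × (-1,1), the only critical points in the interior are (1/√3, 0) and (-1/√3, 0), with h₁(1/√3, 0) = -2/(3√3) and h₁(-1/√3, 0) = 2/(3√3); moreover |h₁(z,w)| ≤ 2/(3√3) for all (z,w) ∈ [-1,1] × (-1,1). -/

import Mathlib

private lemma hasF (z w : ℝ) (hD : (1:ℝ) + w^2 + 2*w*z ≠ 0) :
    HasFDerivAt (fun q : ℝ × ℝ =>
        -((1 + q.1*q.2)*(q.2 + q.1)*(1 - q.1^2)) / (1 + q.2^2 + 2*q.2*q.1)^2)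
      ((-(1 - 2*w^2 + w^4 - 2*z*w - 2*z*w^3 - 3*z^2 - 6*z^2*w^2 - 3*z^2*w^4 - 6*z^3*w
            - 6*z^3*w^3 - 4*z^4*w^2)/(1 + w^2 + 2*w*z)^3) • ContinuousLinearMap.fst ℝ ℝ ℝ +
       (-(1 - 3*w^2 - 4*z*w - 2*z*w^3 - 4*z^2 + 2*z^3*w + 2*z^3*w^3 + 3*z^4 + 3*z^4*w^2
            + 2*z^5*w)/(1 + w^2 + 2*w*z)^3) • ContinuousLinearMap.snd ℝ ℝ ℝ) (z, w) := by
  have hq1 : HasFDerivAt (fun q : ℝ × ℝ => q.1) (ContinuousLinearMap.fst ℝ ℝ ℝ) (z, w) :=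
    hasFDerivAt_fst
  have hq2 : HasFDerivAt (fun q : ℝ × ℝ => q.2) (ContinuousLinearMap.snd ℝ ℝ ℝ) (z, w) :=
    hasFDerivAt_snd
  have hnum : HasFDerivAt
      (fun q : ℝ × ℝ => -((1 + q.1*q.2)*(q.2 + q.1)*(1 - q.1*q.1))) _ (z, w) :=
    ((((hq1.mul hq2).const_add 1).mul (hq2.add hq1)).mul ((hq1.mul hq1).const_sub 1)).neg
  have hden0 : HasFDerivAt (fun q : ℝ × ℝ => 1 + q.2*q.2 + 2*q.2*q.1) _ (z, w) :=
    ((hq2.mul hq2).const_add 1).add ((hq2.const_mul 2).mul hq1)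
  have hd0 : (1:ℝ) + w*w + 2*w*z ≠ 0 := by
    have h' : (1:ℝ) + w*w + 2*w*z = 1 + w^2 + 2*w*z := by ring
    rw [h']; exact hD
  have hinv := (hasFDerivAt_inv' (𝕜 := ℝ) (mul_ne_zero hd0 hd0)).comp (z, w) (hden0.mul hden0)
  have h := hnum.mul hinv
  refine HasFDerivAt.congr_fderiv (HasFDerivAt.congr_of_eventuallyEq h (Filter.Eventually.of_forall fun q => ?_)) ?_
  · simp only [Function.comp, Pi.mul_apply, Pi.pow_apply, Pi.add_apply]
    ring
  · refine ContinuousLinearMap.ext fun v => ?_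
    simp only [ContinuousLinearMap.add_apply, ContinuousLinearMap.smul_apply,
      ContinuousLinearMap.sub_apply, ContinuousLinearMap.coe_fst', ContinuousLinearMap.coe_snd',
      ContinuousLinearMap.neg_apply, ContinuousLinearMap.coe_comp', Function.comp_apply,
      ContinuousLinearMap.mulLeftRight_apply, smul_eq_mul,
      Pi.mul_apply, Pi.add_apply, Pi.pow_apply]
    field_simp
    ring

private lemma comb_eq_zero_iff (a b c : ℝ) (hc : c ≠ 0) :
    (-a/c) • ContinuousLinearMap.fst ℝ ℝ ℝ + (-b/c) • ContinuousLinearMap.snd ℝ ℝ ℝ = 0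
      ↔ a = 0 ∧ b = 0 := by
  constructor
  · intro h
    have h1 : a / c = 0 := by
      have := congrArg (fun L : ℝ × ℝ →L[ℝ] ℝ => L (1, 0)) h
      simpa using this
    have h2 : b / c = 0 := by
      have := congrArg (fun L : ℝ × ℝ →L[ℝ] ℝ => L (0, 1)) h
      simpa using this
    exact ⟨(div_eq_zero_iff.mp h1).resolve_right hc,
           (div_eq_zero_iff.mp h2).resolve_right hc⟩
  · rintro ⟨rfl, rfl⟩
    simp

theorem stmt_13 :
    (∀ p ∈ Set.Ioo (-1 : ℝ) 1 ×ˢ Set.Ioo (-1 : ℝ) 1,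
      fderiv ℝ (fun q : ℝ × ℝ =>
          -((1 + q.1*q.2)*(q.2 + q.1)*(1 - q.1^2)) / (1 + q.2^2 + 2*q.2*q.1)^2) p = 0
        ↔ p = (1/Real.sqrt 3, 0) ∨ p = (-(1/Real.sqrt 3), 0)) ∧
    -((1 + (1/Real.sqrt 3)*(0:ℝ))*((0:ℝ) + 1/Real.sqrt 3)*(1 - (1/Real.sqrt 3)^2))
        / (1 + (0:ℝ)^2 + 2*0*(1/Real.sqrt 3))^2 = -(2/(3*Real.sqrt 3)) ∧
    -((1 + (-(1/Real.sqrt 3))*(0:ℝ))*((0:ℝ) + -(1/Real.sqrt 3))*(1 - (-(1/Real.sqrt 3))^2))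
        / (1 + (0:ℝ)^2 + 2*0*(-(1/Real.sqrt 3)))^2 = 2/(3*Real.sqrt 3) ∧
    ∀ z ∈ Set.Icc (-1 : ℝ) 1, ∀ w ∈ Set.Ioo (-1 : ℝ) 1,
      |(-((1 + z*w)*(w + z)*(1 - z^2))) / (1 + w^2 + 2*w*z)^2| ≤ 2/(3*Real.sqrt 3) := by
  have hs3 : Real.sqrt 3 ^ 2 = 3 := Real.sq_sqrt (by norm_num)
  have hs3pos : (0:ℝ) < Real.sqrt 3 := Real.sqrt_pos.mpr (by norm_num)
  have h13 : (1/Real.sqrt 3)^2 = 1/3 := by rw [div_pow, one_pow, hs3]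
  refine ⟨?_, ?_, ?_, ?_⟩
  · rintro ⟨z, w⟩ ⟨hz, hw⟩
    simp only [Set.mem_Ioo] at hz hw
    have hs : (0:ℝ) < 1 - z^2 := by nlinarith [hz.1, hz.2]
    have hD : (0:ℝ) < 1 + w^2 + 2*w*z := by nlinarith [sq_nonneg (w+z)]
    have hD3 : ((1:ℝ) + w^2 + 2*w*z)^3 ≠ 0 := pow_ne_zero _ hD.ne'
    rw [(hasF z w hD.ne').fderiv, comb_eq_zero_iff _ _ _ hD3]
    constructor
    · rintro ⟨hE1, hE2⟩
      have hG : 1 - 3*w^2 - 4*z*w - 2*z*w^3 - 3*z^2 - 3*z^2*w^2 - 2*z^3*w = 0 := by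
        have hfac : (1 - z^2) * (1 - 3*w^2 - 4*z*w - 2*z*w^3 - 3*z^2 - 3*z^2*w^2 - 2*z^3*w)
            = 0 := by linear_combination hE2
        exact (mul_eq_zero.mp hfac).resolve_left hs.ne'
      have hkey : (1 - 3*z^2) * (4*(1 - z^2)^8) = 0 := by
        linear_combination
          (9 + 12*z*w - 51*z^2 + 4*z^2*w^2 - 46*z^3*w + 125*z^4 - 8*z^4*w^2 + 76*z^5*w
            - 163*z^6 - 4*z^6*w^2 - 78*z^7*w + 111*z^8 + 16*z^8*w^2 + 52*z^9*w - 33*z^10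
            - 4*z^10*w^2 - 10*z^11*w + 7*z^12 - 8*z^12*w^2 - 12*z^13*w - 9*z^14
            + 4*z^14*w^2 + 6*z^15*w + 4*z^16) * hE1 +
          (-5 + 3*w^2 - 14*z*w + 2*z*w^3 + 19*z^2 - 33*z^2*w^2 + 58*z^3*w - 10*z^3*w^3
            - 13*z^4 + 103*z^4*w^2 - 110*z^5*w + 10*z^5*w^3 - 61*z^6 - 161*z^6*w^2
            + 130*z^7*w + 14*z^7*w^3 + 169*z^8 + 157*z^8*w^2 - 98*z^9*w - 26*z^9*w^3
            - 191*z^10 - 91*z^10*w^2 + 46*z^11*w + 2*z^11*w^3 + 105*z^12 + 5*z^12*w^2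
            - 26*z^13*w + 14*z^13*w^3 - 23*z^14 + 29*z^14*w^2 + 22*z^15*w - 6*z^15*w^3
            - 12*z^16*w^2 - 8*z^17*w) * hG
      have h8 : (0:ℝ) < 4*(1 - z^2)^8 := by positivity
      have h13z : 1 - 3*z^2 = 0 := (mul_eq_zero.mp hkey).resolve_right h8.ne'
      have hw0 : w = 0 := by
        by_contra hw0
        have hp1 : 36*z*(1+w^2) + 40*w = 0 := by
          have hm : w * (36*z*(1+w^2) + 40*w) = 0 := by
            linear_combination (-9) * hE1 +
              (9 + 22*w^2 + 9*w^4 + 18*z*w + 18*z*w^3 + 12*z^2*w^2) * h13z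
          exact (mul_eq_zero.mp hm).resolve_left hw0
        have hp2 : 3*z*w^2 + 6*w + 7*z = 0 := by
          have hm : w * (2*(3*z*w^2 + 6*w + 7*z)) = 0 := by
            linear_combination (-3) * hG + (3 + 3*w^2 + 2*z*w) * h13z
          have := (mul_eq_zero.mp hm).resolve_left hw0
          linarith
        have hr : 3*z + 2*w = 0 := by linear_combination (-1/16)*hp1 + (3/4)*hp2
        have hz0 : z = 0 := by
          linear_combination 4*hp2 + 9*z*h13z - (6*z*(w - 3/2*z) + 12)*hr
        rw [hz0] at h13z
        norm_num at h13z
      subst hw0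
      have hfac2 : (z - 1/Real.sqrt 3) * (z + 1/Real.sqrt 3) = 0 := by
        linear_combination (-1/3) * h13z - h13
      rcases mul_eq_zero.mp hfac2 with h | h
      · left
        rw [sub_eq_zero.mp h]
      · right
        rw [eq_neg_of_add_eq_zero_left h]
    · rintro (h | h) <;> injection h with h1 h2 <;> subst h1 <;> subst h2 <;>
        exact ⟨by linear_combination (-3) * h13,
               by linear_combination (3*(1/Real.sqrt 3)^2 - 3) * h13⟩
  · have hne : Real.sqrt 3 ≠ 0 := hs3pos.ne'
    field_simp
    ring_nf
    linear_combination (-Real.sqrt 3) * hs3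
  · have hne : Real.sqrt 3 ≠ 0 := hs3pos.ne'
    field_simp
    ring_nf
    linear_combination Real.sqrt 3 * hs3
  · intro z hz w hw
    simp only [Set.mem_Icc] at hz
    simp only [Set.mem_Ioo] at hw
    have hD : (0:ℝ) < 1 + w^2 + 2*w*z := by
      have hw1 : |w| < 1 := abs_lt.mpr hw
      have hz1 : |z| ≤ 1 := abs_le.mpr hz
      have h1 : -|w| ≤ w*z := by
        have : |w*z| ≤ |w| := by
          rw [abs_mul]
          exact mul_le_of_le_one_right (abs_nonneg w) hz1
        linarith [neg_abs_le (w*z), abs_nonneg (w*z)]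
      have h2 : (0:ℝ) < (1 - |w|)^2 := pow_pos (by linarith) 2
      nlinarith [sq_abs w]
    have hs : (0:ℝ) ≤ 1 - z^2 := by nlinarith [hz.1, hz.2]
    have key : 27*((1 + z*w)*(w + z)*(1 - z^2))^2 ≤ 4*(1 + w^2 + 2*w*z)^4 := by
      nlinarith [sq_nonneg (2*(w+z)^2 - (1-z^2)), sq_nonneg (w+z), sq_nonneg w,
        mul_nonneg (mul_nonneg (sq_nonneg (2*(w+z)^2 - (1-z^2)))
          (by nlinarith [sq_nonneg (w+z)] : (0:ℝ) ≤ (w+z)^2 + 4*(1-z^2))) hD.le,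
        mul_nonneg (mul_nonneg (mul_nonneg (sq_nonneg (1-z^2)) (sq_nonneg (w+z)))
          (sq_nonneg w)) hs]
    rw [abs_div]
    rw [div_le_div_iff₀ (by positivity) (by positivity)]
    have habs2 : |(-((1 + z*w)*(w + z)*(1 - z^2)))|^2 = ((1 + z*w)*(w + z)*(1 - z^2))^2 := by
      rw [sq_abs]; ring
    have hDn2 : |((1 + w^2 + 2*w*z)^2)| = (1 + w^2 + 2*w*z)^2 := abs_of_pos (by positivity)
    rw [hDn2]
    nlinarith [key, habs2, abs_nonneg (-((1 + z*w)*(w + z)*(1 - z^2))), hs3, hs3pos,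
      pow_pos hD 2,
      mul_pos (pow_pos hD 2) hs3pos,
      sq_nonneg (|(-((1 + z*w)*(w + z)*(1 - z^2)))| * (3*Real.sqrt 3)
        - 2*(1 + w^2 + 2*w*z)^2)]
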